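/- If ω satisfies the Diophantine condition with exponent τ, then for η(θ) = Σ_{k≠0} b_k e^{2πikθ} with zero average and coefficients satisfying |b_k| ≤ C e^{−ρ|k|} for some ρ > 0, the formal solution φ with a_k = b_k/(1 − e^{2πiωk}) has coefficients bounded by |a_k| ≤ (C/(4ν)) |k|^{τ} e^{−ρ|k|}; in particular the Fourier series of φ converges absolutely and uniformly. -/

import Mathlib

open Complex in
lemma abs_one_sub_exp_mul_I' (x : ℝ) :
    ‖1 - Complex.exp (x * Complex.I)‖ = 2 * |Real.sin (x / 2)| := by
  rw [Complex.norm_def]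
  have h1 : Complex.normSq (1 - Complex.exp (x * Complex.I)) = 2 - 2 * Real.cos x := by
    rw [Complex.exp_mul_I]
    simp [Complex.normSq_apply, Complex.cos_ofReal_re, Complex.sin_ofReal_re]
    ring_nf
    nlinarith [Real.sin_sq_add_cos_sq x]
  have h2 : Real.cos x = 1 - 2 * Real.sin (x / 2) ^ 2 := by
    have := Real.cos_two_mul (x / 2)
    have hs := Real.sin_sq_add_cos_sq (x / 2)
    rw [show 2 * (x / 2) = x by ring] at this
    nlinarith
  rw [h1, h2, show 2 - 2 * (1 - 2 * Real.sin (x / 2) ^ 2) = (2 * |Real.sin (x / 2)|) ^ 2 by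
    rw [mul_pow, _root_.sq_abs]; ring]
  exact Real.sqrt_sq (by positivity)

lemma denom_lower (ω ν τ : ℝ) (hν : 0 < ν) (hτ : 1 < τ)
    (hdio : ∀ (p : ℤ) (q : ℤ), q ≠ 0 → ν * (|q| : ℝ) ^ (-τ) ≤ |ω * q - p|)
    (k : ℤ) (hk : k ≠ 0) :
    4 * (ν * (|k| : ℝ) ^ (-τ)) ≤
      ‖1 - Complex.exp (2 * (Real.pi : ℂ) * Complex.I * (ω : ℂ) * (k : ℂ))‖ := by
  set p : ℤ := round (ω * k) with hp
  set t : ℝ := ω * k - p with ht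
  have htle : |t| ≤ 1 / 2 := abs_sub_round (ω * k)
  have htge : ν * (|k| : ℝ) ^ (-τ) ≤ |t| := hdio p k hk
  have harg : 2 * (Real.pi : ℂ) * Complex.I * (ω : ℂ) * (k : ℂ)
      = ((2 * Real.pi * t : ℝ) : ℂ) * Complex.I + (p : ℂ) * (2 * (Real.pi : ℂ) * Complex.I) := by
    push_cast [ht]; ring
  have hexp : Complex.exp (2 * (Real.pi : ℂ) * Complex.I * (ω : ℂ) * (k : ℂ))
      = Complex.exp (((2 * Real.pi * t : ℝ) : ℂ) * Complex.I) := by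
    rw [harg, Complex.exp_add, Complex.exp_int_mul_two_pi_mul_I, mul_one]
  rw [hexp, abs_one_sub_exp_mul_I' (2 * Real.pi * t),
    show 2 * Real.pi * t / 2 = Real.pi * t by ring]
  -- |sin (π t)| = sin (π |t|)
  have hπ := Real.pi_pos
  have hsin : Real.sin (Real.pi * |t|) ≤ |Real.sin (Real.pi * t)| := by
    rcases le_or_gt 0 t with h | h
    · rw [abs_of_nonneg h, abs_of_nonneg]
      exact Real.sin_nonneg_of_nonneg_of_le_pi (by positivity)
        (by nlinarith [abs_of_nonneg h ▸ htle])
    · rw [abs_of_neg h, abs_of_nonpos, mul_neg, Real.sin_neg]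
      exact Real.sin_nonpos_of_nonpos_of_neg_pi_le (by nlinarith) (by nlinarith [abs_of_neg h ▸ htle])
  have hms : 2 / Real.pi * (Real.pi * |t|) ≤ Real.sin (Real.pi * |t|) :=
    Real.mul_le_sin (by positivity) (by nlinarith)
  have h2t : 2 * |t| ≤ Real.sin (Real.pi * |t|) := by
    rw [show 2 / Real.pi * (Real.pi * |t|) = 2 * |t| by field_simp] at hms
    exact hms
  nlinarith

/-- For Diophantine `ω` and zero-average `η` with exponentially decaying Fourier
coefficients `|b_k| ≤ C e^{−ρ|k|}`, the formal solution coefficients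
`a_k = b_k/(1 − e^{2πiωk})` satisfy `|a_k| ≤ (C/(4ν)) |k|^τ e^{−ρ|k|}`; in
particular the Fourier series of `φ` converges absolutely and uniformly. -/
theorem diophantine_cohomological_solution_bounds
    (ω ν τ C ρ : ℝ) (hν : 0 < ν) (hτ : 1 < τ) (hC : 0 < C) (hρ : 0 < ρ)
    (hdio : ∀ (p : ℤ) (q : ℤ), q ≠ 0 → ν * (|q| : ℝ) ^ (-τ) ≤ |ω * q - p|)
    (b a : ℤ → ℂ) (hb0 : b 0 = 0)
    (hbdecay : ∀ k : ℤ, ‖b k‖ ≤ C * Real.exp (-ρ * |(k : ℝ)|))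
    (ha0 : a 0 = 0)
    (ha : ∀ k : ℤ, k ≠ 0 →
      a k = b k / (1 - Complex.exp (2 * (Real.pi : ℂ) * Complex.I * (ω : ℂ) * (k : ℂ)))) :
    (∀ k : ℤ, k ≠ 0 →
      ‖a k‖ ≤ C / (4 * ν) * (|k| : ℝ) ^ τ * Real.exp (-ρ * |(k : ℝ)|)) ∧
    Summable (fun k : ℤ => ‖a k‖) ∧
    TendstoUniformly
      (fun (s : Finset ℤ) (θ : ℝ) =>
        ∑ k ∈ s, a k * Complex.exp (2 * (Real.pi : ℂ) * Complex.I * (k : ℂ) * (θ : ℂ)))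
      (fun θ : ℝ =>
        ∑' k : ℤ, a k * Complex.exp (2 * (Real.pi : ℂ) * Complex.I * (k : ℂ) * (θ : ℂ)))
      Filter.atTop := by
  have hbound : ∀ k : ℤ, k ≠ 0 →
      ‖a k‖ ≤ C / (4 * ν) * (|k| : ℝ) ^ τ * Real.exp (-ρ * |(k : ℝ)|) := by
    intro k hk
    have hkpos : (0 : ℝ) < (|k| : ℝ) := by
      exact_mod_cast abs_pos.mpr hk
    have hden := denom_lower ω ν τ hν hτ hdio k hk
    have hdenpos : (0 : ℝ) < 4 * (ν * (|k| : ℝ) ^ (-τ)) := by positivity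
    rw [ha k hk, norm_div]
    calc ‖b k‖ / ‖1 - Complex.exp (2 * (Real.pi : ℂ) * Complex.I * (ω : ℂ) * (k : ℂ))‖
        ≤ (C * Real.exp (-ρ * |(k : ℝ)|)) / (4 * (ν * (|k| : ℝ) ^ (-τ))) := by
          apply div_le_div₀ (by positivity) (hbdecay k) hdenpos hden
      _ = C / (4 * ν) * (|k| : ℝ) ^ τ * Real.exp (-ρ * |(k : ℝ)|) := by
          rw [Real.rpow_neg hkpos.le]
          have h1 : ((|k| : ℝ)) ^ τ ≠ 0 := by positivity
          field_simp
  have hsum : Summable (fun k : ℤ => ‖a k‖) := by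
    have hg : Summable (fun k : ℤ => C / (4 * ν) * (|k| : ℝ) ^ τ * Real.exp (-ρ * |(k : ℝ)|)) := by
      have hnat : Summable (fun n : ℕ => C / (4 * ν) * ((n : ℝ)) ^ τ * Real.exp (-ρ * (n : ℝ))) := by
        set m : ℕ := ⌈τ⌉₊ with hm
        have hr : ‖Real.exp (-ρ)‖ < 1 := by
          rw [Real.norm_eq_abs, abs_of_pos (Real.exp_pos _)]
          exact Real.exp_lt_one_iff.mpr (by linarith)
        have hgeo := (summable_pow_mul_geometric_of_norm_lt_one (k := m) hr).mul_left (C / (4 * ν))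
        apply hgeo.of_nonneg_of_le (fun n => by positivity)
        intro n
        rcases Nat.eq_zero_or_pos n with rfl | hn
        · simp [Real.zero_rpow (by positivity : τ ≠ 0)]
          positivity
        · have h1n : (1 : ℝ) ≤ n := by exact_mod_cast hn
          have hpow : ((n : ℝ)) ^ τ ≤ ((n : ℝ)) ^ (m : ℕ) := by
            rw [← Real.rpow_natCast (n : ℝ) m]
            exact Real.rpow_le_rpow_of_exponent_le h1n (Nat.le_ceil τ)
          have hexp : Real.exp (-ρ * (n : ℝ)) = Real.exp (-ρ) ^ n := by
            rw [← Real.exp_nat_mul]; ring_nf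
          rw [hexp]
          have hcp : (0:ℝ) < C / (4 * ν) := by positivity
          calc C / (4 * ν) * (n : ℝ) ^ τ * Real.exp (-ρ) ^ n
              ≤ C / (4 * ν) * ((n : ℝ)) ^ (m : ℕ) * Real.exp (-ρ) ^ n := by
                apply mul_le_mul_of_nonneg_right _ (by positivity)
                exact mul_le_mul_of_nonneg_left hpow hcp.le
            _ = C / (4 * ν) * (((n : ℝ)) ^ (m : ℕ) * Real.exp (-ρ) ^ n) := by ring
      apply Summable.of_nat_of_neg
      · convert hnat using 2 with n
        case e'_3 => rfl
        push_cast
        simp [abs_of_nonneg (Nat.cast_nonneg n : (0:ℝ) ≤ n)]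
      · convert hnat using 2 with n
        case e'_3 => rfl
        push_cast
        simp [abs_of_nonneg (Nat.cast_nonneg n : (0:ℝ) ≤ n)]
    apply hg.of_nonneg_of_le (fun k => by positivity)
    intro k
    rcases eq_or_ne k 0 with rfl | hk
    · simp [ha0]
      positivity
    · exact hbound k hk
  refine ⟨hbound, hsum, ?_⟩
  apply tendstoUniformly_tsum hsum
  intro k θ
  rw [norm_mul, Complex.norm_exp]
  have hre : (2 * (Real.pi : ℂ) * Complex.I * (k : ℂ) * (θ : ℂ)).re = 0 := by simp
  rw [hre, Real.exp_zero, mul_one]
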